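/- For every natural number n, ∑_{k=0}^{⌊n/2⌋} C(n,2k)·C_k·(2x+1)^{n−2k}·(x(x+1))^k = s_{n+1}(x) as polynomials in x, where C_k is the Catalan number and s_m(x) = ∑_{j=1}^m (1/m)C(m,j)C(m,j−1) x^{j−1}(x+1)^{m−j}. -/

import Mathlib

open Finset Polynomial



lemma coeff_one_add_C_mul_X_pow {R : Type*} [CommRing R] (c : R) (m a : ℕ) :
    ((1 + C c * X) ^ m).coeff a = (m.choose a : R) * c ^ a := by
  rw [add_comm, add_pow]
  simp only [one_pow, mul_one, finset_sum_coeff, mul_pow, ← C_pow, ← C_eq_natCast,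
    coeff_C_mul, coeff_mul_C, coeff_X_pow]
  rcases le_or_gt a m with h | h
  · rw [Finset.sum_eq_single a]
    · simp [mul_comm]
    · intro b _ hb; simp [Ne.symm hb]
    · intro hmem; exact absurd (Finset.mem_range.mpr (by omega)) hmem
  · rw [Finset.sum_eq_zero, Nat.choose_eq_zero_of_lt h]
    · simp
    · intro b hb; rw [Finset.mem_range] at hb
      rw [if_neg (by omega)]; ring

lemma coeff_one_add_C_mul_X_sq_pow {R : Type*} [CommRing R] (c : R) (m d : ℕ) :
    ((1 + C c * X ^ 2) ^ m).coeff d =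
      if 2 ∣ d then (m.choose (d / 2) : R) * c ^ (d / 2) else 0 := by
  rw [add_comm, add_pow]
  simp only [one_pow, mul_one, finset_sum_coeff, mul_pow, ← pow_mul, ← C_pow, ← C_eq_natCast,
    coeff_C_mul, coeff_mul_C, coeff_X_pow]
  by_cases hd : 2 ∣ d
  · rw [if_pos hd]
    rcases le_or_gt (d / 2) m with h | h
    · rw [Finset.sum_eq_single (d / 2)]
      · rw [if_pos (by omega)]; ring
      · intro b _ hb; rw [if_neg (by omega)]; ring
      · intro hmem; exact absurd (Finset.mem_range.mpr (by omega)) hmem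
    · rw [Finset.sum_eq_zero, Nat.choose_eq_zero_of_lt h]
      · simp
      · intro b hb; rw [Finset.mem_range] at hb
        rw [if_neg (by omega)]; ring
  · rw [if_neg hd, Finset.sum_eq_zero]
    intro b _; rw [if_neg (by omega)]; ring

lemma trinom_expand {R : Type*} [CommRing R] (u v : R) (n : ℕ) :
    ∑ a ∈ range (n + 1),
        ((n + 1).choose a : R) * ((n + 1).choose (n - a) : R) * u ^ a * v ^ (n - a) =
    ∑ k ∈ range (n / 2 + 1),
        ((n + 1).choose (2 * k + 1) : R) * ((2 * k + 1).choose k : R) *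
          (u + v) ^ (n - 2 * k) * (u * v) ^ k := by
  set F : ℕ → R := fun m =>
    if m ≤ n ∧ 2 ∣ (n - m) then
      ((n + 1).choose m : R) * (u + v) ^ m *
        (((n + 1 - m).choose ((n - m) / 2) : R) * (u * v) ^ ((n - m) / 2))
    else 0 with hF
  have h1 : (((1 + C u * X) * (1 + C v * X)) ^ (n + 1)).coeff n
      = ∑ a ∈ range (n + 1),
          ((n + 1).choose a : R) * ((n + 1).choose (n - a) : R) * u ^ a * v ^ (n - a) := by
    rw [mul_pow, coeff_mul, Finset.Nat.sum_antidiagonal_eq_sum_range_succ_mk]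
    refine Finset.sum_congr rfl fun a _ => ?_
    rw [coeff_one_add_C_mul_X_pow, coeff_one_add_C_mul_X_pow]; ring
  have h2 : (1 + C u * X) * (1 + C v * X) = C (u + v) * X + (1 + C (u * v) * X ^ 2) := by
    simp only [C_add, C_mul]; ring
  have h3 : (((C (u + v)) * X + (1 + C (u * v) * X ^ 2)) ^ (n + 1)).coeff n
      = ∑ m ∈ range (n + 2), F m := by
    rw [add_pow, finset_sum_coeff]
    refine Finset.sum_congr rfl fun m hm => ?_
    have hterm : (C (u + v) * X) ^ m * (1 + C (u * v) * X ^ 2) ^ (n + 1 - m)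
          * ((n + 1).choose m : R[X])
        = (C ((u + v) ^ m) * C (((n + 1).choose m : R))
            * (1 + C (u * v) * X ^ 2) ^ (n + 1 - m)) * X ^ m := by
      rw [mul_pow, ← C_pow, C_eq_natCast]; ring
    rw [hterm, coeff_mul_X_pow']; simp only [hF]
    by_cases hmn : m ≤ n
    · rw [if_pos hmn]
      rw [mul_assoc, coeff_C_mul, coeff_C_mul, coeff_one_add_C_mul_X_sq_pow]
      by_cases hdvd : 2 ∣ (n - m)
      · rw [if_pos hdvd, if_pos ⟨hmn, hdvd⟩]; ring
      · rw [if_neg hdvd, if_neg (by tauto)]; ring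
    · rw [if_neg hmn, if_neg (by tauto)]
  have hsub : (range (n / 2 + 1)).image (fun k => n - 2 * k) ⊆ range (n + 2) := by
    intro m hm
    simp only [Finset.mem_image, Finset.mem_range] at hm ⊢
    obtain ⟨k, hk, rfl⟩ := hm; omega
  have h4 : ∑ m ∈ range (n + 2), F m
      = ∑ m ∈ (range (n / 2 + 1)).image (fun k => n - 2 * k), F m := by
    refine (Finset.sum_subset hsub ?_).symm
    intro m hm hnot
    rw [Finset.mem_range] at hm
    simp only [Finset.mem_image, Finset.mem_range] at hnot
    push_neg at hnot
    simp only [hF]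
    by_cases hc : m ≤ n ∧ 2 ∣ (n - m)
    · exact absurd (by omega : n - 2 * ((n - m) / 2) = m) (hnot ((n - m) / 2) (by omega))
    · exact if_neg hc
  have h5 : ∑ m ∈ (range (n / 2 + 1)).image (fun k => n - 2 * k), F m
      = ∑ k ∈ range (n / 2 + 1), F (n - 2 * k) := by
    refine Finset.sum_image ?_
    intro k1 h1' k2 h2' h
    rw [Finset.coe_range, Set.mem_Iio] at h1' h2'; simp only at h; omega
  have h6 : ∀ k ∈ range (n / 2 + 1), F (n - 2 * k)
      = ((n + 1).choose (2 * k + 1) : R) * ((2 * k + 1).choose k : R) *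
          (u + v) ^ (n - 2 * k) * (u * v) ^ k := by
    intro k hk
    rw [Finset.mem_range] at hk
    have h2k : 2 * k ≤ n := by omega
    simp only [hF]
    rw [if_pos ⟨by omega, by omega⟩]
    have e1 : n - (n - 2 * k) = 2 * k := by omega
    have e2 : n + 1 - (n - 2 * k) = 2 * k + 1 := by omega
    have e3 : (n + 1).choose (n - 2 * k) = (n + 1).choose (2 * k + 1) := by
      rw [← Nat.choose_symm (show 2 * k + 1 ≤ n + 1 by omega)]
      congr 1; omega
    rw [e1, e2, e3]
    have e4 : 2 * k / 2 = k := by omega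
    rw [e4]; ring
  calc ∑ a ∈ range (n + 1),
        ((n + 1).choose a : R) * ((n + 1).choose (n - a) : R) * u ^ a * v ^ (n - a)
      = (((1 + C u * X) * (1 + C v * X)) ^ (n + 1)).coeff n := h1.symm
    _ = ∑ m ∈ range (n + 2), F m := by rw [h2, h3]
    _ = ∑ k ∈ range (n / 2 + 1), F (n - 2 * k) := by rw [h4, h5]
    _ = _ := Finset.sum_congr rfl h6


lemma key_nat (n k : ℕ) :
    (n + 1) * n.choose (2 * k) * catalan k = (n + 1).choose (2 * k + 1) * (2 * k + 1).choose k := by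
  apply Nat.eq_of_mul_eq_mul_left (show 0 < (k + 1) * (2 * k + 1) by positivity)
  have c1 : (n + 1) * n.choose (2 * k) = (n + 1).choose (2 * k + 1) * (2 * k + 1) :=
    Nat.add_one_mul_choose_eq n (2 * k)
  have c2 : (k + 1) * catalan k = Nat.centralBinom k := succ_mul_catalan_eq_centralBinom k
  have c3 : (2 * k + 1) * Nat.centralBinom k = (2 * k + 1).choose (k + 1) * (k + 1) :=
    Nat.add_one_mul_choose_eq (2 * k) k
  have c4 : (2 * k + 1).choose (k + 1) = (2 * k + 1).choose k := by
    rw [← Nat.choose_symm (show k + 1 ≤ 2 * k + 1 by omega)]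
    congr 1; omega
  calc (k + 1) * (2 * k + 1) * ((n + 1) * n.choose (2 * k) * catalan k)
      = ((n + 1) * n.choose (2 * k)) * ((2 * k + 1) * ((k + 1) * catalan k)) := by ring
    _ = ((n + 1).choose (2 * k + 1) * (2 * k + 1)) * ((2 * k + 1) * Nat.centralBinom k) := by
        rw [c1, c2]
    _ = ((n + 1).choose (2 * k + 1) * (2 * k + 1)) * ((2 * k + 1).choose (k + 1) * (k + 1)) := by
        rw [c3]
    _ = (k + 1) * (2 * k + 1) * ((n + 1).choose (2 * k + 1) * (2 * k + 1).choose k) := by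
        rw [c4]; ring



theorem schroeder_trinomial_form (n : ℕ) :
    (∑ k ∈ range (n / 2 + 1),
        C ((n.choose (2 * k) : ℚ) * (catalan k : ℚ)) *
          (2 * X + 1) ^ (n - 2 * k) * (X * (X + 1)) ^ k) =
    ∑ j ∈ Icc 1 (n + 1),
      C ((1 / ((n : ℚ) + 1)) * ((n + 1).choose j : ℚ) * ((n + 1).choose (j - 1) : ℚ)) *
        X ^ (j - 1) * (X + 1) ^ (n + 1 - j) := by
  have hne : ((n : ℚ) + 1) ≠ 0 := by positivity
  apply mul_left_cancel₀ (show (C ((n : ℚ) + 1) : ℚ[X]) ≠ 0 from by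
    rw [Ne, C_eq_zero]; exact hne)
  rw [Finset.mul_sum, Finset.mul_sum]
  have hL : ∑ k ∈ range (n / 2 + 1), C ((n : ℚ) + 1) *
        (C ((n.choose (2 * k) : ℚ) * (catalan k : ℚ)) *
          (2 * X + 1) ^ (n - 2 * k) * (X * (X + 1)) ^ k)
      = ∑ k ∈ range (n / 2 + 1),
          ((n + 1).choose (2 * k + 1) : ℚ[X]) * ((2 * k + 1).choose k : ℚ[X]) *
            (X + (X + 1)) ^ (n - 2 * k) * (X * (X + 1)) ^ k := by
    refine Finset.sum_congr rfl fun k _ => ?_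
    have hsc : ((n : ℚ) + 1) * ((n.choose (2 * k) : ℚ) * (catalan k : ℚ))
        = ((n + 1).choose (2 * k + 1) : ℚ) * ((2 * k + 1).choose k : ℚ) := by
      calc ((n : ℚ) + 1) * ((n.choose (2 * k) : ℚ) * (catalan k : ℚ))
          = (((n + 1) * n.choose (2 * k) * catalan k : ℕ) : ℚ) := by push_cast; ring
        _ = _ := by rw [key_nat n k]; push_cast; ring
    rw [← mul_assoc, ← mul_assoc, ← C_mul, hsc, C_mul, C_eq_natCast, C_eq_natCast]
    rw [show (2 * X + 1 : ℚ[X]) = X + (X + 1) from by ring]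
  have hIcc : Icc 1 (n + 1) = (range (n + 1)).image (fun i => i + 1) := by
    ext m
    simp only [Finset.mem_Icc, Finset.mem_image, Finset.mem_range]
    constructor
    · rintro ⟨h1, h2⟩; exact ⟨m - 1, by omega, by omega⟩
    · rintro ⟨i, hi, rfl⟩; omega
  have hR : ∑ j ∈ Icc 1 (n + 1), C ((n : ℚ) + 1) *
        (C ((1 / ((n : ℚ) + 1)) * ((n + 1).choose j : ℚ) * ((n + 1).choose (j - 1) : ℚ)) *
          X ^ (j - 1) * (X + 1) ^ (n + 1 - j))
      = ∑ a ∈ range (n + 1),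
          ((n + 1).choose a : ℚ[X]) * ((n + 1).choose (n - a) : ℚ[X]) *
            X ^ a * (X + 1) ^ (n - a) := by
    rw [hIcc, Finset.sum_image (fun a _ b _ h => by omega)]
    refine Finset.sum_congr rfl fun i hi => ?_
    rw [Finset.mem_range] at hi
    have e1 : i + 1 - 1 = i := by omega
    have e2 : n + 1 - (i + 1) = n - i := by omega
    have e3 : (n + 1).choose (i + 1) = (n + 1).choose (n - i) := by
      rw [← Nat.choose_symm (show n - i ≤ n + 1 by omega)]
      congr 1; omega
    rw [e1, e2, e3]
    rw [← mul_assoc, ← mul_assoc, ← C_mul]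
    have hsc : ((n : ℚ) + 1) * (1 / ((n : ℚ) + 1) * ((n + 1).choose (n - i) : ℚ)
          * ((n + 1).choose i : ℚ))
        = ((n + 1).choose i : ℚ) * ((n + 1).choose (n - i) : ℚ) := by
      field_simp
    rw [hsc, C_mul, C_eq_natCast, C_eq_natCast]
  rw [hL, hR, trinom_expand]
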